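/- Let T > 0, let f : ℝ → ℝ be a continuous T-periodic function with ∫₀ᵀ f(t) dt ≠ 0, and let α ∈ (0,1). If ∫₀ᵀ f(t) dt > 0 then I^α f(t) → +∞ as t → +∞, and if ∫₀ᵀ f(t) dt < 0 then I^α f(t) → −∞ as t → +∞. -/

import Mathlib

open MeasureTheory intervalIntegral Filter Set

lemma per_bound (f : ℝ → ℝ) (hf : Continuous f) {T : ℝ} (hT : 0 < T)
    (hper : Function.Periodic f T) : ∃ C : ℝ, ∀ x, |f x| ≤ C := by
  obtain ⟨C, hC⟩ := (isCompact_Icc (a := (0:ℝ)) (b := T)).exists_bound_of_continuousOn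
    hf.continuousOn
  refine ⟨C, fun x => ?_⟩
  obtain ⟨y, hy, hxy⟩ := hper.exists_mem_Ico₀ hT x
  rw [hxy, ← Real.norm_eq_abs]
  exact hC y ⟨hy.1, hy.2.le⟩

lemma key (T : ℝ) (hT : 0 < T) (f : ℝ → ℝ) (hf : Continuous f)
    (hper : Function.Periodic f T) (α : ℝ) (hα0 : 0 < α) (hα1 : α < 1) :
    ∃ B : ℝ, ∀ t, T ≤ t →
      |(∫ s in (0:ℝ)..t, (t - s) ^ (α - 1) * f s)
        - ((∫ u in (0:ℝ)..T, f u) / (T * α)) * t ^ α| ≤ B := by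
  set m := ∫ u in (0:ℝ)..T, f u with hm
  set h : ℝ → ℝ := fun s => f s - m / T with hh
  have hhc : Continuous h := hf.sub continuous_const
  have hhper : Function.Periodic h T := fun x => by simp [hh, hper x]
  have hint0 : ∫ u in (0:ℝ)..T, h u = 0 := by
    rw [hh, intervalIntegral.integral_sub (hf.intervalIntegrable _ _)
      intervalIntegrable_const, intervalIntegral.integral_const]
    show m - (T - 0) • (m / T) = 0
    rw [sub_zero, smul_eq_mul, mul_div_cancel₀ _ hT.ne', sub_self]
  set H : ℝ → ℝ := fun s => ∫ u in (0:ℝ)..s, h u with hH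
  have hHderiv : ∀ s, HasDerivAt H (h s) s := fun s =>
    intervalIntegral.integral_hasDerivAt_right (hhc.intervalIntegrable _ _)
      (hhc.stronglyMeasurableAtFilter _ _) hhc.continuousAt
  have hHcont : Continuous H := by
    have : Differentiable ℝ H := fun s => (hHderiv s).differentiableAt
    exact this.continuous
  have hHper : Function.Periodic H T := by
    intro s
    have h1 : H (s + T) = H s + ∫ u in s..(s + T), h u :=
      (intervalIntegral.integral_add_adjacent_intervals
        (hhc.intervalIntegrable _ _) (hhc.intervalIntegrable _ _)).symm
    rw [h1, hhper.intervalIntegral_add_eq s 0, zero_add, hint0, add_zero]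
  obtain ⟨M, hM⟩ := per_bound H hHcont hT hHper
  obtain ⟨C, hC⟩ := per_bound h hhc hT hhper
  have hM0 : 0 ≤ M := le_trans (abs_nonneg _) (hM 0)
  have hC0 : 0 ≤ C := le_trans (abs_nonneg _) (hC 0)
  refine ⟨2 * M * T ^ (α - 1) + C * (T ^ α / α), fun t ht => ?_⟩
  have ht0 : (0:ℝ) < t := lt_of_lt_of_le hT ht
  have htT : 0 ≤ t - T := by linarith
  -- integrability of the kernel
  have hKint : IntervalIntegrable (fun s => (t - s) ^ (α - 1)) volume 0 t := by
    have := (intervalIntegrable_rpow' (a := 0) (b := t) (r := α - 1)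
      (by linarith)).comp_sub_left t
    simpa using this.symm
  have hsub1 : uIcc (0:ℝ) (t - T) ⊆ uIcc 0 t := by
    rw [uIcc_of_le htT, uIcc_of_le ht0.le]
    exact Icc_subset_Icc le_rfl (by linarith)
  have hsub2 : uIcc (t - T) t ⊆ uIcc 0 t := by
    rw [uIcc_of_le (by linarith : t - T ≤ t), uIcc_of_le ht0.le]
    exact Icc_subset_Icc htT le_rfl
  have hKh_int : IntervalIntegrable (fun s => (t - s) ^ (α - 1) * h s) volume 0 t :=
    hKint.mul_continuousOn hhc.continuousOn
  -- kernel integral over the whole interval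
  have hKtot : ∫ s in (0:ℝ)..t, (t - s) ^ (α - 1) = t ^ α / α := by
    have h1 := intervalIntegral.integral_comp_sub_left (a := (0:ℝ)) (b := t)
      (fun x => x ^ (α - 1)) t
    simp only [sub_self, sub_zero] at h1
    rw [h1, integral_rpow (Or.inl (by linarith))]
    rw [sub_add_cancel, Real.zero_rpow hα0.ne']
    ring
  -- split off the mean
  have hsplit : ∫ s in (0:ℝ)..t, (t - s) ^ (α - 1) * f s
      = (∫ s in (0:ℝ)..t, (t - s) ^ (α - 1) * h s) + (m / (T * α)) * t ^ α := by
    have e1 : ∀ s ∈ uIcc (0:ℝ) t, (t - s) ^ (α - 1) * f s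
        = (t - s) ^ (α - 1) * h s + (t - s) ^ (α - 1) * (m / T) := by
      intro s _; simp only [hh]; ring
    rw [intervalIntegral.integral_congr e1,
      intervalIntegral.integral_add hKh_int (hKint.mul_const _),
      intervalIntegral.integral_mul_const, hKtot]
    have : t ^ α / α * (m / T) = m / (T * α) * t ^ α := by
      field_simp
    rw [this]
  rw [hsplit, add_sub_cancel_right]
  -- split the remainder integral at t - T
  have hKh1 : IntervalIntegrable (fun s => (t - s) ^ (α - 1) * h s) volume 0 (t - T) :=
    hKh_int.mono_set hsub1
  have hKh2 : IntervalIntegrable (fun s => (t - s) ^ (α - 1) * h s) volume (t - T) t :=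
    hKh_int.mono_set hsub2
  have hsplit2 : ∫ s in (0:ℝ)..t, (t - s) ^ (α - 1) * h s
      = (∫ s in (0:ℝ)..(t - T), (t - s) ^ (α - 1) * h s)
        + ∫ s in (t - T)..t, (t - s) ^ (α - 1) * h s :=
    (intervalIntegral.integral_add_adjacent_intervals hKh1 hKh2).symm
  rw [hsplit2]
  -- bound for the tail piece
  have tail_bound : |∫ s in (t - T)..t, (t - s) ^ (α - 1) * h s| ≤ C * (T ^ α / α) := by
    have habs := intervalIntegral.abs_integral_le_integral_abs (μ := volume)
      (f := fun s => (t - s) ^ (α - 1) * h s) (by linarith : t - T ≤ t)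
    have hmono : (∫ s in (t - T)..t, |(t - s) ^ (α - 1) * h s|)
        ≤ ∫ s in (t - T)..t, C * (t - s) ^ (α - 1) := by
      apply intervalIntegral.integral_mono_on (by linarith : t - T ≤ t) hKh2.abs
        ((hKint.mono_set hsub2).const_mul C)
      intro x hx
      have hx2 : 0 ≤ t - x := by linarith [hx.2]
      rw [abs_mul, abs_of_nonneg (Real.rpow_nonneg hx2 _)]
      calc (t - x) ^ (α - 1) * |h x| ≤ (t - x) ^ (α - 1) * C := by
            exact mul_le_mul_of_nonneg_left (hC x) (Real.rpow_nonneg hx2 _)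
        _ = C * (t - x) ^ (α - 1) := mul_comm _ _
    have hctot : ∫ s in (t - T)..t, C * (t - s) ^ (α - 1) = C * (T ^ α / α) := by
      rw [intervalIntegral.integral_const_mul]
      have h1 := intervalIntegral.integral_comp_sub_left (a := t - T) (b := t)
        (fun x => x ^ (α - 1)) t
      simp only [sub_self, sub_sub_cancel] at h1
      rw [h1, integral_rpow (Or.inl (by linarith))]
      rw [sub_add_cancel, Real.zero_rpow hα0.ne']
      ring
    calc |∫ s in (t - T)..t, (t - s) ^ (α - 1) * h s| ≤ _ := habs
      _ ≤ _ := hmono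
      _ = C * (T ^ α / α) := hctot
  -- integration by parts on the head piece
  have hpos : ∀ x ∈ uIcc (0:ℝ) (t - T), 0 < t - x := by
    intro x hx
    rw [uIcc_of_le htT] at hx
    have := hx.2; linarith [hT]
  have hucont : ContinuousOn (fun s => (t - s) ^ (α - 1)) (uIcc (0:ℝ) (t - T)) := by
    apply ContinuousOn.rpow_const ((continuous_const.sub continuous_id).continuousOn)
    intro x hx; exact Or.inl (hpos x hx).ne'
  have hu'cont : ContinuousOn (fun s => -((α - 1) * (t - s) ^ (α - 2))) (uIcc (0:ℝ) (t - T)) := by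
    apply ContinuousOn.neg
    apply ContinuousOn.mul continuousOn_const
    apply ContinuousOn.rpow_const ((continuous_const.sub continuous_id).continuousOn)
    intro x hx; exact Or.inl (hpos x hx).ne'
  have hderivu : ∀ x ∈ Ioo (min (0:ℝ) (t - T)) (max 0 (t - T)),
      HasDerivAt (fun s => (t - s) ^ (α - 1)) (-((α - 1) * (t - x) ^ (α - 2))) x := by
    intro x hx
    have hxmem : x ∈ uIcc (0:ℝ) (t - T) := Ioo_subset_Icc_self hx
    have h1 : HasDerivAt (fun s : ℝ => t - s) (-1) x := (hasDerivAt_id x).const_sub t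
    have h2 := Real.hasDerivAt_rpow_const (x := t - x) (p := α - 1)
      (Or.inl (hpos x hxmem).ne')
    have h3 := h2.comp x h1
    have : α - 1 - 1 = α - 2 := by ring
    rw [this] at h3
    exact h3.congr_deriv (by ring)
  have hibp := intervalIntegral.integral_mul_deriv_eq_deriv_mul_of_hasDerivAt
    (u := fun s => (t - s) ^ (α - 1)) (v := H)
    (u' := fun s => -((α - 1) * (t - s) ^ (α - 2))) (v' := h)
    hucont hHcont.continuousOn hderivu (fun x _ => hHderiv x)
    (hu'cont.intervalIntegrable) (hhc.intervalIntegrable _ _)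
  have hH0 : H 0 = 0 := intervalIntegral.integral_same
  have huT : (t - (t - T)) ^ (α - 1) = T ^ (α - 1) := by norm_num
  have head_bound : |∫ s in (0:ℝ)..(t - T), (t - s) ^ (α - 1) * h s| ≤ 2 * M * T ^ (α - 1) := by
    rw [hibp]
    simp only [sub_sub_cancel, hH0, mul_zero, sub_zero]
    have b1 : |T ^ (α - 1) * H (t - T)| ≤ T ^ (α - 1) * M := by
      rw [abs_mul, abs_of_nonneg (Real.rpow_nonneg hT.le _)]
      exact mul_le_mul_of_nonneg_left (hM _) (Real.rpow_nonneg hT.le _)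
    have b2 : |∫ x in (0:ℝ)..(t - T), -((α - 1) * (t - x) ^ (α - 2)) * H x|
        ≤ M * T ^ (α - 1) := by
      have habs := intervalIntegral.abs_integral_le_integral_abs (μ := volume)
        (f := fun x => -((α - 1) * (t - x) ^ (α - 2)) * H x) htT
      have hmono : (∫ x in (0:ℝ)..(t - T), |(-((α - 1) * (t - x) ^ (α - 2))) * H x|)
          ≤ ∫ x in (0:ℝ)..(t - T), (1 - α) * (t - x) ^ (α - 2) * M := by
        apply intervalIntegral.integral_mono_on htT
          ((hu'cont.mul hHcont.continuousOn).intervalIntegrable).abs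
        · exact (((continuousOn_const.mul (ContinuousOn.rpow_const
            ((continuous_const.sub continuous_id).continuousOn)
            (fun x hx => Or.inl (hpos x hx).ne'))).mul
            continuousOn_const).intervalIntegrable)
        · intro x hx
          have hxm : x ∈ uIcc (0:ℝ) (t - T) := by rwa [uIcc_of_le htT]
          have hp := hpos x hxm
          simp only [Pi.mul_apply]
          rw [abs_mul, abs_neg, abs_mul, abs_of_neg (by linarith : α - 1 < 0),
            abs_of_nonneg (Real.rpow_nonneg hp.le _)]
          have : -(α - 1) = 1 - α := by ring
          rw [this]
          exact mul_le_mul_of_nonneg_left (hM x)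
            (mul_nonneg (by linarith) (Real.rpow_nonneg hp.le _))
      have hcomp : (∫ x in (0:ℝ)..(t - T), (1 - α) * (t - x) ^ (α - 2) * M)
          ≤ M * T ^ (α - 1) := by
        rw [show (fun x => (1 - α) * (t - x) ^ (α - 2) * M)
          = (fun x => ((1 - α) * M) * (t - x) ^ (α - 2)) from funext fun x => by ring]
        rw [intervalIntegral.integral_const_mul]
        have h1 := intervalIntegral.integral_comp_sub_left (a := (0:ℝ)) (b := t - T)
          (fun x => x ^ (α - 2)) t
        simp only [sub_zero, sub_sub_cancel] at h1
        rw [h1, integral_rpow (Or.inr ⟨by intro hc; apply hα1.ne; linarith,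
          by rw [uIcc_of_le ht, mem_Icc]; push_neg; intro hc; linarith⟩)]
        have e2 : α - 2 + 1 = α - 1 := by ring
        rw [e2]
        have htpow : (0:ℝ) ≤ t ^ (α - 1) := Real.rpow_nonneg ht0.le _
        have hαne : α - 1 ≠ 0 := sub_ne_zero.mpr hα1.ne
        have : (1 - α) * M * ((t ^ (α - 1) - T ^ (α - 1)) / (α - 1))
            = M * (T ^ (α - 1) - t ^ (α - 1)) := by
          field_simp
          ring
        rw [this]
        nlinarith [Real.rpow_nonneg ht0.le (α - 1), hM0]
      calc |∫ x in (0:ℝ)..(t - T), -((α - 1) * (t - x) ^ (α - 2)) * H x| ≤ _ := habs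
        _ ≤ _ := hmono
        _ ≤ M * T ^ (α - 1) := hcomp
    calc |T ^ (α - 1) * H (t - T) - ∫ x in (0:ℝ)..(t - T), -((α - 1) * (t - x) ^ (α - 2)) * H x|
        ≤ |T ^ (α - 1) * H (t - T)|
          + |∫ x in (0:ℝ)..(t - T), -((α - 1) * (t - x) ^ (α - 2)) * H x| := abs_sub _ _
      _ ≤ T ^ (α - 1) * M + M * T ^ (α - 1) := add_le_add b1 b2
      _ = 2 * M * T ^ (α - 1) := by ring
  calc |(∫ s in (0:ℝ)..(t - T), (t - s) ^ (α - 1) * h s)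
        + ∫ s in (t - T)..t, (t - s) ^ (α - 1) * h s|
      ≤ |∫ s in (0:ℝ)..(t - T), (t - s) ^ (α - 1) * h s|
        + |∫ s in (t - T)..t, (t - s) ^ (α - 1) * h s| := abs_add_le _ _
    _ ≤ 2 * M * T ^ (α - 1) + C * (T ^ α / α) := add_le_add head_bound tail_bound

/-- For a continuous `T`-periodic `f` with nonzero mean and `α ∈ (0,1)`, the
fractional integral `I^α f (t)` tends to `+∞` if `∫₀ᵀ f > 0` and to `-∞` if
`∫₀ᵀ f < 0`, as `t → +∞`. -/
theorem rl_integral_diverges_of_nonzero_mean (T : ℝ) (hT : 0 < T)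
    (f : ℝ → ℝ) (hf : Continuous f) (hper : Function.Periodic f T)
    (hne : (∫ t in (0 : ℝ)..T, f t) ≠ 0)
    (α : ℝ) (hα : α ∈ Set.Ioo (0 : ℝ) 1) :
    ((0 : ℝ) < (∫ t in (0 : ℝ)..T, f t) →
      Tendsto (fun t : ℝ =>
          (1 / Real.Gamma α) * ∫ s in (0 : ℝ)..t, (t - s) ^ (α - 1) * f s)
        atTop atTop) ∧
    ((∫ t in (0 : ℝ)..T, f t) < 0 →
      Tendsto (fun t : ℝ =>
          (1 / Real.Gamma α) * ∫ s in (0 : ℝ)..t, (t - s) ^ (α - 1) * f s)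
        atTop atBot) := by
  obtain ⟨hα0, hα1⟩ := hα
  obtain ⟨B, hB⟩ := key T hT f hf hper α hα0 hα1
  set m := ∫ u in (0 : ℝ)..T, f u with hm
  have hΓ : 0 < Real.Gamma α := Real.Gamma_pos_of_pos hα0
  have hΓ' : 0 < 1 / Real.Gamma α := by positivity
  have hTα : 0 < T * α := mul_pos hT hα0
  constructor
  · intro hmpos
    have hc : 0 < m / (T * α) := div_pos hmpos hTα
    have h1 : Tendsto (fun t : ℝ => (1 / Real.Gamma α) * ((m / (T * α)) * t ^ α - B))
        atTop atTop := by
      apply Tendsto.const_mul_atTop hΓ'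
      simpa [sub_eq_add_neg] using tendsto_atTop_add_const_right atTop (-B)
        ((tendsto_rpow_atTop hα0).const_mul_atTop hc)
    apply tendsto_atTop_mono' atTop ?_ h1
    filter_upwards [eventually_ge_atTop T] with t htT
    have h2 := (abs_le.mp (hB t htT)).1
    have h3 : (m / (T * α)) * t ^ α - B ≤ ∫ s in (0 : ℝ)..t, (t - s) ^ (α - 1) * f s := by
      linarith
    exact mul_le_mul_of_nonneg_left h3 hΓ'.le
  · intro hmneg
    have hc : 0 < -(m / (T * α)) := by
      rw [neg_pos]
      exact div_neg_of_neg_of_pos hmneg hTα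
    have h1 : Tendsto (fun t : ℝ => (1 / Real.Gamma α) * ((m / (T * α)) * t ^ α + B))
        atTop atBot := by
      apply Tendsto.const_mul_atBot hΓ'
      apply tendsto_atBot_add_const_right atTop B
      have := (tendsto_rpow_atTop hα0).const_mul_atTop hc
      have h2 := tendsto_neg_atTop_atBot.comp this
      have he : (Neg.neg ∘ fun x : ℝ => -(m / (T * α)) * x ^ α)
          = fun x : ℝ => m / (T * α) * x ^ α := by
        funext x; simp
      rwa [he] at h2
    apply tendsto_atBot_mono' atTop ?_ h1
    filter_upwards [eventually_ge_atTop T] with t htT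
    have h2 := (abs_le.mp (hB t htT)).2
    have h3 : (∫ s in (0 : ℝ)..t, (t - s) ^ (α - 1) * f s) ≤ (m / (T * α)) * t ^ α + B := by
      linarith
    exact mul_le_mul_of_nonneg_left h3 hΓ'.le
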